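/- Let E and F be normed vector spaces over ℂ, let σ₀ > σ > 0, c > 0 and C_R > 0 be real numbers, let k be a natural number with k ≥ 1, and set λ := k^{1/3} and T* := ln(k)/(3·(σ₀ − σ)·λ). Let T : ℝ → (F →L[ℂ] E) be a family of continuous linear operators, let x ∈ F with ‖x‖ ≤ 1, let g : ℝ → F and u : ℝ → E, and assume: (i) for every t ∈ [0, T*], the function s ↦ T(t − s)(g(s)) is Bochner integrable on [0, t] and u(t) = T(t)(x) + ∫₀ᵗ T(t − s)(g(s)) ds; (ii) ‖u(t)‖ ≥ c·e^{σ₀·λ·t} for every t ∈ [0, T*]; (iii) ‖g(s)‖ ≤ C_R·e^{σ₀·λ·s} for every s ∈ [0, T*]. Then there exists t ∈ [0, T*] such that e^{−σ·λ·t}·‖T(t)‖ > (c/2)·((σ₀ − σ)/((σ₀ − σ) + C_R))·λ, where ‖T(t)‖ denotes the operator norm. -/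

import Mathlib

open MeasureTheory

set_option maxHeartbeats 1000000 in
/-- The abstract content of Lemma 2.3 of the paper: a Duhamel identity together
with exponential growth of the forced solution and an exponential bound on the
forcing imply a lower bound on the weighted operator norm of the solution
family on a time interval of length `ln k / (3 (σ₀ - σ) k^{1/3})`. -/
theorem stmt16 {E F : Type*} [NormedAddCommGroup E] [NormedSpace ℂ E]
    [NormedAddCommGroup F] [NormedSpace ℂ F]
    (σ₀ σ c CR : ℝ) (hσ : 0 < σ) (hσ₀ : σ < σ₀) (hc : 0 < c) (hCR : 0 < CR)
    (k : ℕ) (hk : 1 ≤ k)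
    (lam Tstar : ℝ) (hlam : lam = (k : ℝ) ^ ((1 : ℝ) / 3))
    (hTstar : Tstar = Real.log k / (3 * (σ₀ - σ) * lam))
    (T : ℝ → F →L[ℂ] E) (x : F) (hx : ‖x‖ ≤ 1)
    (g : ℝ → F) (u : ℝ → E)
    (hDuhamel : ∀ t ∈ Set.Icc (0 : ℝ) Tstar,
      IntegrableOn (fun s => T (t - s) (g s)) (Set.Icc (0 : ℝ) t) ∧
      u t = T t x + ∫ s in (0 : ℝ)..t, T (t - s) (g s))
    (hgrow : ∀ t ∈ Set.Icc (0 : ℝ) Tstar, c * Real.exp (σ₀ * lam * t) ≤ ‖u t‖)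
    (hg : ∀ s ∈ Set.Icc (0 : ℝ) Tstar, ‖g s‖ ≤ CR * Real.exp (σ₀ * lam * s)) :
    ∃ t ∈ Set.Icc (0 : ℝ) Tstar,
      c / 2 * ((σ₀ - σ) / ((σ₀ - σ) + CR)) * lam
        < Real.exp (-σ * lam * t) * ‖T t‖ := by
  by_contra hcon
  push_neg at hcon
  have hσδ : (0:ℝ) < σ₀ - σ := by linarith
  have hk1 : (1:ℝ) ≤ (k:ℝ) := by exact_mod_cast hk
  have hkpos : (0:ℝ) < (k:ℝ) := by linarith
  have hlam1 : (1:ℝ) ≤ lam := by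
    rw [hlam]
    exact Real.one_le_rpow hk1 (by norm_num)
  have hlampos : 0 < lam := by linarith
  have hTnn : 0 ≤ Tstar := by
    rw [hTstar]
    apply div_nonneg (Real.log_nonneg hk1)
    positivity
  have hexpT : Real.exp ((σ₀ - σ) * lam * Tstar) = lam := by
    have h1 : (σ₀ - σ) * lam * Tstar = Real.log k / 3 := by
      rw [hTstar]
      field_simp
    rw [h1, hlam, Real.rpow_def_of_pos hkpos]
    ring_nf
  obtain ⟨M, hM⟩ : ∃ M : ℝ, M = c / 2 * ((σ₀ - σ) / ((σ₀ - σ) + CR)) * lam := ⟨_, rfl⟩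
  have hMpos : 0 < M := by
    rw [hM]
    exact mul_pos (mul_pos (by positivity) (div_pos hσδ (by linarith))) hlampos
  -- operator norm bound from the negated conclusion
  have hTb : ∀ t ∈ Set.Icc (0:ℝ) Tstar, ‖T t‖ ≤ M * Real.exp (σ * lam * t) := by
    intro t ht
    have h := hcon t ht
    rw [← hM] at h
    have he : Real.exp (σ * lam * t) * Real.exp (-σ * lam * t) = 1 := by
      rw [← Real.exp_add]
      ring_nf
      exact Real.exp_zero
    calc ‖T t‖ = Real.exp (σ * lam * t) * (Real.exp (-σ * lam * t) * ‖T t‖) := by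
          rw [← mul_assoc, he, one_mul]
      _ ≤ Real.exp (σ * lam * t) * M :=
          mul_le_mul_of_nonneg_left h (Real.exp_nonneg _)
      _ = M * Real.exp (σ * lam * t) := mul_comm _ _
  obtain ⟨hint, hu⟩ := hDuhamel Tstar ⟨hTnn, le_refl _⟩
  obtain ⟨a, ha⟩ : ∃ a : ℝ, a = (σ₀ - σ) * lam := ⟨_, rfl⟩
  have hapos : 0 < a := ha ▸ mul_pos hσδ hlampos
  obtain ⟨e, he'⟩ : ∃ e : ℝ, e = Real.exp (σ * lam * Tstar) := ⟨_, rfl⟩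
  have hepos : 0 < e := he' ▸ Real.exp_pos _
  obtain ⟨K, hK⟩ : ∃ K : ℝ, K = M * CR * e := ⟨_, rfl⟩
  have hKpos : 0 < K := by rw [hK]; exact mul_pos (mul_pos hMpos hCR) hepos
  -- pointwise bound on the integrand
  have hpt : ∀ s ∈ Set.uIoc (0:ℝ) Tstar, ‖T (Tstar - s) (g s)‖ ≤ K * Real.exp (a * s) := by
    intro s hs
    rw [Set.uIoc_of_le hTnn] at hs
    have hsI : s ∈ Set.Icc (0:ℝ) Tstar := ⟨le_of_lt hs.1, hs.2⟩
    have hs2 : Tstar - s ∈ Set.Icc (0:ℝ) Tstar := ⟨by linarith [hs.2], by linarith [hs.1]⟩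
    have h1 : ‖T (Tstar - s) (g s)‖ ≤ ‖T (Tstar - s)‖ * ‖g s‖ :=
      (T (Tstar - s)).le_opNorm _
    have h2 : ‖T (Tstar - s)‖ * ‖g s‖ ≤
        (M * Real.exp (σ * lam * (Tstar - s))) * (CR * Real.exp (σ₀ * lam * s)) := by
      apply mul_le_mul (hTb _ hs2) (hg _ hsI) (norm_nonneg _)
      exact mul_nonneg hMpos.le (Real.exp_nonneg _)
    have h3 : (M * Real.exp (σ * lam * (Tstar - s))) * (CR * Real.exp (σ₀ * lam * s))
        = K * Real.exp (a * s) := by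
      rw [hK, he', ha]
      have hA : σ * lam * (Tstar - s) + σ₀ * lam * s
          = σ * lam * Tstar + (σ₀ - σ) * lam * s := by ring
      calc (M * Real.exp (σ * lam * (Tstar - s))) * (CR * Real.exp (σ₀ * lam * s))
          = M * CR * Real.exp (σ * lam * (Tstar - s) + σ₀ * lam * s) := by
            rw [Real.exp_add]; ring
        _ = M * CR * Real.exp (σ * lam * Tstar) * Real.exp ((σ₀ - σ) * lam * s) := by
            rw [hA, Real.exp_add]; ring
    linarith [h3.le, h3.ge]
  -- integrability of the bound
  have hbint : IntervalIntegrable (fun s => K * Real.exp (a * s)) volume 0 Tstar := by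
    apply Continuous.intervalIntegrable
    continuity
  -- value of the bounding integral
  have hival : (∫ s in (0:ℝ)..Tstar, K * Real.exp (a * s)) = K * ((lam - 1) / a) := by
    rw [intervalIntegral.integral_const_mul]
    rw [intervalIntegral.integral_comp_mul_left (fun y => Real.exp y) (ne_of_gt hapos)]
    simp only [mul_zero, smul_eq_mul, integral_exp, Real.exp_zero]
    have h2 : Real.exp (a * Tstar) = lam := by rw [ha]; exact hexpT
    rw [h2]
    field_simp
  -- bound the integral term
  have hIb : ‖∫ s in (0:ℝ)..Tstar, T (Tstar - s) (g s)‖ ≤ K * ((lam - 1) / a) := by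
    have h := intervalIntegral.norm_integral_le_of_norm_le
      (f := fun s => T (Tstar - s) (g s)) (g := fun s => K * Real.exp (a * s))
      (μ := volume) (a := 0) (b := Tstar)
      hTnn (Filter.Eventually.of_forall (fun s hs => hpt s (by rw [Set.uIoc_of_le hTnn]; exact hs))) hbint
    rw [hival] at h
    exact h
  -- first term bound
  have hfb : ‖T Tstar x‖ ≤ M * e := by
    calc ‖T Tstar x‖ ≤ ‖T Tstar‖ * ‖x‖ := (T Tstar).le_opNorm x
      _ ≤ (M * Real.exp (σ * lam * Tstar)) * 1 :=
          mul_le_mul (hTb Tstar ⟨hTnn, le_refl _⟩) hx (norm_nonneg _)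
            (mul_nonneg hMpos.le (Real.exp_nonneg _))
      _ = M * e := by rw [he', mul_one]
  -- total upper bound
  have hub : ‖u Tstar‖ ≤ M * e + K * ((lam - 1) / a) := by
    rw [hu]
    calc ‖T Tstar x + ∫ s in (0:ℝ)..Tstar, T (Tstar - s) (g s)‖
        ≤ ‖T Tstar x‖ + ‖∫ s in (0:ℝ)..Tstar, T (Tstar - s) (g s)‖ := norm_add_le _ _
      _ ≤ M * e + K * ((lam - 1) / a) := add_le_add hfb hIb
  -- lower bound
  have hlb : c * lam * e ≤ ‖u Tstar‖ := by
    have hgr := hgrow Tstar ⟨hTnn, le_refl _⟩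
    have h1 : Real.exp (σ₀ * lam * Tstar) = lam * e := by
      rw [he', show σ₀ * lam * Tstar = (σ₀ - σ) * lam * Tstar + σ * lam * Tstar from by ring,
        Real.exp_add, hexpT]
    calc c * lam * e = c * Real.exp (σ₀ * lam * Tstar) := by rw [h1]; ring
      _ ≤ ‖u Tstar‖ := hgr
  -- algebra: the upper bound is at most (c/2) * lam * e
  have hkey : M * e + K * ((lam - 1) / a) ≤ c / 2 * lam * e := by
    have h1 : K * ((lam - 1) / a) ≤ K * (lam / a) := by
      gcongr
      linarith
    have h2 : M * e + K * (lam / a) = c / 2 * lam * e := by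
      rw [hK, hM, ha]
      have hne1 : (σ₀ - σ) + CR ≠ 0 := by linarith
      have hne2 : σ₀ - σ ≠ 0 := ne_of_gt hσδ
      have hne3 : lam ≠ 0 := ne_of_gt hlampos
      field_simp
    linarith
  have hfin : c * lam * e ≤ c / 2 * lam * e := le_trans hlb (le_trans hub hkey)
  nlinarith [mul_pos hlampos hepos]
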